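/- For the system f_1(c) = p_1 c_0/(p_2 + c_3) - p_3 c_1, f_2(c) = p_3 c_1 - p_4 c_2, f_3(c) = p_4 c_2 - p_5 c_3/(p_6 + c_3) with all parameters strictly positive, the determinant of the Jacobian matrix ∂f/∂c is strictly negative at every point c in the open positive orthant ℝ³_{>0}. -/

import Mathlib

set_option maxHeartbeats 1000000 in
open ContinuousLinearMap in
theorem stmt_3 (p1 p2 p3 p4 p5 p6 c0 : ℝ)
    (hp1 : 0 < p1) (hp2 : 0 < p2) (hp3 : 0 < p3) (hp4 : 0 < p4)
    (hp5 : 0 < p5) (hp6 : 0 < p6) (hc0 : 0 < c0)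
    (c : Fin 3 → ℝ) (hc : ∀ i, 0 < c i) :
    (Matrix.of fun i j : Fin 3 =>
      fderiv ℝ (fun x : Fin 3 → ℝ =>
        (![p1 * c0 / (p2 + x 2) - p3 * x 0,
           p3 * x 0 - p4 * x 1,
           p4 * x 1 - p5 * x 2 / (p6 + x 2)] : Fin 3 → ℝ) i) c
        (Pi.single j (1 : ℝ))).det < 0 := by
  have h2 : (0:ℝ) < c 2 := hc 2
  have hd2 : p2 + c 2 ≠ 0 := by positivity
  have hd6 : p6 + c 2 ≠ 0 := by positivity
  have hproj : ∀ k : Fin 3, HasFDerivAt (fun x : Fin 3 → ℝ => x k)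
      ((ContinuousLinearMap.proj k : (Fin 3 → ℝ) →L[ℝ] ℝ)) c := fun k =>
    ((ContinuousLinearMap.proj k : (Fin 3 → ℝ) →L[ℝ] ℝ)).hasFDerivAt
  have hinv2 : HasFDerivAt (fun x : Fin 3 → ℝ => (p2 + x 2)⁻¹)
      ((smulRight (1 : ℝ →L[ℝ] ℝ) (-((p2 + c 2) ^ 2)⁻¹)).comp
        ((ContinuousLinearMap.proj (2:Fin 3) : (Fin 3 → ℝ) →L[ℝ] ℝ))) c :=
    (hasFDerivAt_inv hd2).comp c ((hproj 2).const_add p2)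
  have hinv6 : HasFDerivAt (fun x : Fin 3 → ℝ => (p6 + x 2)⁻¹)
      ((smulRight (1 : ℝ →L[ℝ] ℝ) (-((p6 + c 2) ^ 2)⁻¹)).comp
        ((ContinuousLinearMap.proj (2:Fin 3) : (Fin 3 → ℝ) →L[ℝ] ℝ))) c :=
    (hasFDerivAt_inv hd6).comp c ((hproj 2).const_add p6)
  have h1 : HasFDerivAt (fun x : Fin 3 → ℝ => p1 * c0 / (p2 + x 2) - p3 * x 0)
      ((p1 * c0) • (smulRight (1 : ℝ →L[ℝ] ℝ) (-((p2 + c 2) ^ 2)⁻¹)).comp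
          ((ContinuousLinearMap.proj (2:Fin 3) : (Fin 3 → ℝ) →L[ℝ] ℝ)) -
        p3 • (ContinuousLinearMap.proj (0:Fin 3) : (Fin 3 → ℝ) →L[ℝ] ℝ)) c := by
    simp only [div_eq_mul_inv]
    exact (hinv2.const_mul (p1 * c0)).sub ((hproj 0).const_mul p3)
  have h2' : HasFDerivAt (fun x : Fin 3 → ℝ => p3 * x 0 - p4 * x 1)
      (p3 • (ContinuousLinearMap.proj (0:Fin 3) : (Fin 3 → ℝ) →L[ℝ] ℝ) - p4 • (ContinuousLinearMap.proj (1:Fin 3) : (Fin 3 → ℝ) →L[ℝ] ℝ)) c :=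
    ((hproj 0).const_mul p3).sub ((hproj 1).const_mul p4)
  have h3 : HasFDerivAt (fun x : Fin 3 → ℝ => p4 * x 1 - p5 * x 2 / (p6 + x 2))
      (p4 • (ContinuousLinearMap.proj (1:Fin 3) : (Fin 3 → ℝ) →L[ℝ] ℝ) -
        ((p5 * c 2) • (smulRight (1 : ℝ →L[ℝ] ℝ) (-((p6 + c 2) ^ 2)⁻¹)).comp
            ((ContinuousLinearMap.proj (2:Fin 3) : (Fin 3 → ℝ) →L[ℝ] ℝ)) +
          (p6 + c 2)⁻¹ • p5 • (ContinuousLinearMap.proj (2:Fin 3) : (Fin 3 → ℝ) →L[ℝ] ℝ))) c := by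
    simp only [div_eq_mul_inv]
    exact ((hproj 1).const_mul p4).sub (((hproj 2).const_mul p5).mul hinv6)
  have e0 : (fun x : Fin 3 → ℝ =>
      (![p1 * c0 / (p2 + x 2) - p3 * x 0,
         p3 * x 0 - p4 * x 1,
         p4 * x 1 - p5 * x 2 / (p6 + x 2)] : Fin 3 → ℝ) 0) =
      fun x : Fin 3 → ℝ => p1 * c0 / (p2 + x 2) - p3 * x 0 := rfl
  have e1 : (fun x : Fin 3 → ℝ =>
      (![p1 * c0 / (p2 + x 2) - p3 * x 0,
         p3 * x 0 - p4 * x 1,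
         p4 * x 1 - p5 * x 2 / (p6 + x 2)] : Fin 3 → ℝ) 1) =
      fun x : Fin 3 → ℝ => p3 * x 0 - p4 * x 1 := rfl
  have e2 : (fun x : Fin 3 → ℝ =>
      (![p1 * c0 / (p2 + x 2) - p3 * x 0,
         p3 * x 0 - p4 * x 1,
         p4 * x 1 - p5 * x 2 / (p6 + x 2)] : Fin 3 → ℝ) 2) =
      fun x : Fin 3 → ℝ => p4 * x 1 - p5 * x 2 / (p6 + x 2) := rfl
  rw [Matrix.det_fin_three]
  simp only [Matrix.of_apply, e0, e1, e2, h1.fderiv, h2'.fderiv, h3.fderiv]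
  simp only [ContinuousLinearMap.sub_apply, ContinuousLinearMap.add_apply,
    ContinuousLinearMap.smul_apply, ContinuousLinearMap.comp_apply,
    ContinuousLinearMap.smulRight_apply, ContinuousLinearMap.one_apply,
    ContinuousLinearMap.proj_apply, Pi.single_apply, smul_eq_mul]
  norm_num [Fin.ext_iff]
  have hA : 0 < p1 * c0 / (p2 + c 2)^2 := by positivity
  have hB : 0 < p5 * p6 / (p6 + c 2)^2 := by positivity
  have hq2 : (0:ℝ) < (p2 + c 2)^2 := by positivity
  have hq6 : (0:ℝ) < (p6 + c 2)^2 := by positivity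
  have key : p5 * c 2 * ((p6 + c 2) ^ 2)⁻¹ + (p6 + c 2)⁻¹ * p5
      = p5 * c 2 * ((p6 + c 2) ^ 2)⁻¹ + (p6 + c 2)⁻¹ * p5 := rfl
  field_simp
  have hL : p3 * p4 * (-(p5 * (p6 + c 2) ^ 2) + p5 * c 2 * (p6 + c 2)) /
      ((p6 + c 2) * (p6 + c 2) ^ 2) < 0 := by
    apply div_neg_of_neg_of_pos
    · nlinarith [mul_pos (mul_pos hp3 hp4)
        (mul_pos (mul_pos hp5 hp6) (by positivity : (0:ℝ) < p6 + c 2))]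
    · positivity
  have hR : (0:ℝ) < p1 * c0 * p3 * p4 / (p2 + c 2) ^ 2 := by positivity
  nlinarith [mul_pos (mul_pos hp5 hp6) hq2, mul_pos (mul_pos hq6 hp1) hc0]
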